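/- Let Ω be the set of flags (V,W) in ℝ³ such that V ⊄ span{e₁,e₃} and e₂ ∉ W. Then for every A ∈ SL(2,ℝ) and every (V,W) ∈ Ω the flag (ι(A)·V, ι(A)·W) again lies in Ω, and for any two flags F, F' ∈ Ω there exists a unique A ∈ SL(2,ℝ) with (ι(A)·V, ι(A)·W) = F' where F = (V,W); that is, SL(2,ℝ) acting via ι is simply transitive on Ω. -/

import Mathlib

open Matrix Submodule

/-- The completely reducible embedding `ι : SL(2,ℝ) → SL(3,ℝ)`,
sending `[[a,b],[c,d]]` to the matrix with rows `(a,0,b),(0,1,0),(c,0,d)`. -/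
noncomputable def iota (A : Matrix.SpecialLinearGroup (Fin 2) ℝ) :
    Matrix.SpecialLinearGroup (Fin 3) ℝ :=
  ⟨!![A.1 0 0, 0, A.1 0 1; 0, 1, 0; A.1 1 0, 0, A.1 1 1], by
    have h := A.2
    rw [Matrix.det_fin_two] at h
    rw [Matrix.det_fin_three]
    simp
    linarith⟩

/-- Membership in `Ω`: a flag `(V,W)` in `ℝ³` with `V ⊄ span{e₁,e₃}` and `e₂ ∉ W`. -/
def MemOmega (V W : Submodule ℝ (Fin 3 → ℝ)) : Prop :=
  Module.finrank ℝ V = 1 ∧ Module.finrank ℝ W = 2 ∧ V ≤ W ∧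
    ¬ V ≤ span ℝ {![1,0,0], ![0,0,1]} ∧ ![0,1,0] ∉ W

noncomputable section
namespace S13

def emb (p : Fin 2 → ℝ) : Fin 3 → ℝ := ![p 0, 1, p 1]
def flat (q : Fin 2 → ℝ) : Fin 3 → ℝ := ![q 0, 0, q 1]
def dd (p q : Fin 2 → ℝ) : ℝ := p 0 * q 1 - p 1 * q 0

@[simp] lemma emb0 (p) : emb p 0 = p 0 := rfl
@[simp] lemma emb1 (p) : emb p 1 = 1 := rfl
@[simp] lemma emb2 (p) : emb p 2 = p 1 := rfl
@[simp] lemma flat0 (q) : flat q 0 = q 0 := rfl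
@[simp] lemma flat1 (q) : flat q 1 = 0 := rfl
@[simp] lemma flat2 (q) : flat q 2 = q 1 := rfl

lemma emb_ne_zero (p : Fin 2 → ℝ) : emb p ≠ 0 := by
  intro h
  have := congrFun h 1
  simp [emb] at this

lemma emb_inj {p p' : Fin 2 → ℝ} (h : emb p = emb p') : p = p' := by
  funext i
  fin_cases i
  · exact congrFun h 0
  · exact congrFun h 2

lemma flat_inj {q q' : Fin 2 → ℝ} (h : flat q = flat q') : q = q' := by
  funext i
  fin_cases i
  · exact congrFun h 0
  · exact congrFun h 2

lemma mem_P (v : Fin 3 → ℝ) :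
    v ∈ span ℝ {![(1:ℝ),0,0], ![0,0,1]} ↔ v 1 = 0 := by
  rw [mem_span_pair]
  constructor
  · rintro ⟨a, b, rfl⟩
    simp
  · intro h
    refine ⟨v 0, v 2, ?_⟩
    funext i
    fin_cases i <;> simp [h.symm] <;> simp [h]

lemma li_pair {p q : Fin 2 → ℝ} (h : dd p q ≠ 0) :
    LinearIndependent ℝ ![emb p, flat q] := by
  rw [LinearIndependent.pair_iff]
  intro s t hst
  have h1 := congrFun hst 1
  simp [emb, flat] at h1
  subst h1
  refine ⟨rfl, ?_⟩
  by_contra ht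
  have h0 := congrFun hst 0
  have h2 := congrFun hst 2
  simp [emb, flat] at h0 h2
  apply h
  rcases h0 with rfl | h0
  · simp at ht
  rcases h2 with rfl | h2
  · simp at ht
  rw [dd, h0, h2]; ring

lemma finrank_span_pair {p q : Fin 2 → ℝ} (h : dd p q ≠ 0) :
    Module.finrank ℝ (span ℝ {emb p, flat q}) = 2 := by
  have := finrank_span_eq_card (li_pair h)
  rw [show Set.range ![emb p, flat q] = {emb p, flat q} by
    simp [Matrix.range_cons, Set.pair_comm]] at this
  simpa using this

lemma e2_not_mem {p q : Fin 2 → ℝ} (h : dd p q ≠ 0) :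
    ![(0:ℝ),1,0] ∉ span ℝ {emb p, flat q} := by
  rw [mem_span_pair]
  rintro ⟨a, b, hab⟩
  have h1 := congrFun hab 1
  simp [emb, flat] at h1
  subst h1
  have h0 := congrFun hab 0
  have h2 := congrFun hab 2
  simp [emb, flat] at h0 h2
  apply h
  rw [dd]
  linear_combination q 1 * h0 - q 0 * h2


lemma e2_mem_of_dd_zero {p q : Fin 2 → ℝ} (hq : q ≠ 0) (h : dd p q = 0) :
    ![(0:ℝ),1,0] ∈ span ℝ {emb p, flat q} := by
  rw [mem_span_pair]
  by_cases hq0 : q 0 = 0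
  · have hq1 : q 1 ≠ 0 := by
      intro hq1
      apply hq
      funext i; fin_cases i <;> assumption
    have hp0 : p 0 = 0 := by
      rw [dd, hq0] at h
      simp at h
      rcases h with h | h
      · exact h
      · exact absurd h hq1
    refine ⟨1, -(p 1 / q 1), ?_⟩
    funext i
    fin_cases i <;> simp [emb, flat, hp0, hq0] <;> field_simp <;> ring
  · refine ⟨1, -(p 0 / q 0), ?_⟩
    funext i
    fin_cases i
    · simp [emb, flat]; field_simp; ring
    · simp [emb, flat]
    · simp [emb, flat]; field_simp
      rw [dd] at h
      linear_combination -h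

lemma memOmega_iff {V W : Submodule ℝ (Fin 3 → ℝ)} :
    MemOmega V W ↔ ∃ p q, dd p q ≠ 0 ∧ V = span ℝ {emb p} ∧
      W = span ℝ {emb p, flat q} := by
  constructor
  · rintro ⟨h1, h2, hVW, hVP, he2⟩
    have h1' := h1
    rw [finrank_eq_one_iff'] at h1'
    obtain ⟨⟨v, hvV⟩, hv0, hgen⟩ := h1'
    have hVv : V = span ℝ {v} := by
      apply le_antisymm
      · intro w hw
        obtain ⟨c, hc⟩ := hgen ⟨w, hw⟩
        rw [mem_span_singleton]
        exact ⟨c, congrArg Subtype.val hc⟩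
      · rw [span_le, Set.singleton_subset_iff]; exact hvV
    have hv1 : v 1 ≠ 0 := by
      intro h
      apply hVP
      rw [hVv, span_le, Set.singleton_subset_iff]
      exact (mem_P v).2 h
    set c := (v 1)⁻¹ with hc
    set p : Fin 2 → ℝ := ![c * v 0, c * v 2] with hp
    have hembp : emb p = c • v := by
      funext i
      fin_cases i <;> simp [emb, hp, hc]
      exact (inv_mul_cancel₀ hv1).symm
    have hV : V = span ℝ {emb p} := by
      rw [hembp, hVv, span_singleton_smul_eq (isUnit_iff_ne_zero.2 (inv_ne_zero hv1))]
    have hembpV : emb p ∈ V := by rw [hV]; exact mem_span_singleton_self _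
    have hVltW : V < W := by
      refine lt_of_le_of_ne hVW ?_
      intro h
      rw [h, h2] at h1
      exact absurd h1 (by norm_num)
    obtain ⟨w, hwW, hwV⟩ := SetLike.exists_of_lt hVltW
    have huW : w - w 1 • emb p ∈ W := sub_mem hwW (smul_mem _ _ (hVW hembpV))
    set u := w - w 1 • emb p with hu
    have hu1 : u 1 = 0 := by
      have : u 1 = w 1 - w 1 * 1 := rfl
      rw [this]; ring
    have hu0 : u ≠ 0 := by
      intro h
      apply hwV
      have hw' : w = w 1 • emb p := by
        rw [hu] at h; exact sub_eq_zero.1 h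
      rw [hw']
      exact smul_mem _ _ hembpV
    set q : Fin 2 → ℝ := ![u 0, u 2] with hqdef
    have hflatq : flat q = u := by
      funext i
      fin_cases i
      · rfl
      · exact hu1.symm
      · rfl
    have hq0 : q ≠ 0 := by
      intro h
      apply hu0
      rw [← hflatq, h]
      funext i; fin_cases i <;> simp [flat]
    have hspanle : span ℝ {emb p, flat q} ≤ W := by
      rw [span_le, Set.insert_subset_iff, Set.singleton_subset_iff]
      exact ⟨hVW hembpV, hflatq ▸ huW⟩
    have hd : dd p q ≠ 0 := by
      intro h
      exact he2 (hspanle (e2_mem_of_dd_zero hq0 h))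
    exact ⟨p, q, hd, hV,
      (eq_of_le_of_finrank_eq hspanle (by rw [finrank_span_pair hd, h2])).symm⟩
  · rintro ⟨p, q, hd, rfl, rfl⟩
    have hq : q ≠ 0 := by
      intro h
      apply hd
      rw [dd, h]; simp
    refine ⟨finrank_span_singleton (emb_ne_zero p), finrank_span_pair hd, ?_, ?_, e2_not_mem hd⟩
    · exact span_mono (Set.singleton_subset_iff.2 (Set.mem_insert _ _))
    · intro h
      have := h (mem_span_singleton_self (emb p))
      rw [mem_P] at this
      simp [emb] at this


lemma iota_mulVec_emb (A : Matrix.SpecialLinearGroup (Fin 2) ℝ) (p : Fin 2 → ℝ) :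
    (iota A).1.mulVec (emb p) = emb (A.1.mulVec p) := by
  funext i
  fin_cases i <;>
    simp [iota, emb, Matrix.mulVec, dotProduct, Fin.sum_univ_three,
      Fin.sum_univ_two] <;> ring

lemma iota_mulVec_flat (A : Matrix.SpecialLinearGroup (Fin 2) ℝ) (q : Fin 2 → ℝ) :
    (iota A).1.mulVec (flat q) = flat (A.1.mulVec q) := by
  funext i
  fin_cases i <;>
    simp [iota, flat, Matrix.mulVec, dotProduct, Fin.sum_univ_three,
      Fin.sum_univ_two] <;> ring

lemma map_V (A : Matrix.SpecialLinearGroup (Fin 2) ℝ) (p : Fin 2 → ℝ) :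
    Submodule.map (iota A).1.mulVecLin (span ℝ {emb p}) = span ℝ {emb (A.1.mulVec p)} := by
  rw [Submodule.map_span, Set.image_singleton, Matrix.mulVecLin_apply, iota_mulVec_emb]

lemma map_W (A : Matrix.SpecialLinearGroup (Fin 2) ℝ) (p q : Fin 2 → ℝ) :
    Submodule.map (iota A).1.mulVecLin (span ℝ {emb p, flat q}) =
      span ℝ {emb (A.1.mulVec p), flat (A.1.mulVec q)} := by
  rw [Submodule.map_span, Set.image_pair, Matrix.mulVecLin_apply, Matrix.mulVecLin_apply,
    iota_mulVec_emb, iota_mulVec_flat]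

lemma dd_mulVec (A : Matrix.SpecialLinearGroup (Fin 2) ℝ) (p q : Fin 2 → ℝ) :
    dd (A.1.mulVec p) (A.1.mulVec q) = dd p q := by
  have h := A.2
  rw [Matrix.det_fin_two] at h
  simp only [dd, Matrix.mulVec, dotProduct, Fin.sum_univ_two]
  linear_combination (p 0 * q 1 - p 1 * q 0) * h

lemma part1 (A : Matrix.SpecialLinearGroup (Fin 2) ℝ) {V W : Submodule ℝ (Fin 3 → ℝ)}
    (h : MemOmega V W) :
    MemOmega (Submodule.map (iota A).1.mulVecLin V) (Submodule.map (iota A).1.mulVecLin W) := by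
  rw [memOmega_iff] at h ⊢
  obtain ⟨p, q, hd, rfl, rfl⟩ := h
  exact ⟨A.1.mulVec p, A.1.mulVec q, by rw [dd_mulVec]; exact hd, map_V A p, map_W A p q⟩


def Bm (p q : Fin 2 → ℝ) : Matrix (Fin 2) (Fin 2) ℝ := !![p 0, q 0; p 1, q 1]

lemma det_Bm (p q : Fin 2 → ℝ) : (Bm p q).det = dd p q := by
  rw [Matrix.det_fin_two]
  simp [Bm, dd]; ring

lemma Bm_mulVec_e0 (p q : Fin 2 → ℝ) : (Bm p q).mulVec ![1, 0] = p := by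
  funext i
  fin_cases i <;> simp [Bm, Matrix.mulVec, dotProduct, Fin.sum_univ_two]

lemma Bm_mulVec_e1 (p q : Fin 2 → ℝ) : (Bm p q).mulVec ![0, 1] = q := by
  funext i
  fin_cases i <;> simp [Bm, Matrix.mulVec, dotProduct, Fin.sum_univ_two]

lemma dd_smul_right (p q : Fin 2 → ℝ) (l : ℝ) : dd p (l • q) = l * dd p q := by
  simp [dd]; ring

lemma flat_smul (q : Fin 2 → ℝ) (l : ℝ) : flat (l • q) = l • flat q := by
  funext i; fin_cases i <;> simp [flat]

lemma span_pair_smul_right {u w : Fin 3 → ℝ} {l : ℝ} (hl : l ≠ 0) :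
    span ℝ {u, l • w} = span ℝ {u, w} := by
  rw [show ({u, l • w} : Set (Fin 3 → ℝ)) = insert u {l • w} from rfl,
    show ({u, w} : Set (Fin 3 → ℝ)) = insert u {w} from rfl,
    span_insert, span_insert, span_singleton_smul_eq (isUnit_iff_ne_zero.2 hl)]

/-- canonical matrix sending the frame `(p,q)` to `(p', l•q')` -/
def cm (p q p' q' : Fin 2 → ℝ) : Matrix (Fin 2) (Fin 2) ℝ :=
  Bm p' ((dd p q / dd p' q') • q') * (Bm p q)⁻¹

lemma det_cm {p q p' q' : Fin 2 → ℝ} (hd : dd p q ≠ 0) (hd' : dd p' q' ≠ 0) :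
    (cm p q p' q').det = 1 := by
  rw [cm, Matrix.det_mul, Matrix.det_nonsing_inv, det_Bm, det_Bm, dd_smul_right,
    Ring.inverse_eq_inv']
  field_simp

lemma cm_mulVec_p {p q p' q' : Fin 2 → ℝ} (hd : dd p q ≠ 0) :
    (cm p q p' q').mulVec p = p' := by
  have h1 : (Bm p q)⁻¹.mulVec p = ![1, 0] := by
    calc (Bm p q)⁻¹.mulVec _ = (Bm p q)⁻¹.mulVec ((Bm p q).mulVec ![1, 0]) := by
          rw [Bm_mulVec_e0]
      _ = ![1, 0] := by
          rw [Matrix.mulVec_mulVec, Matrix.nonsing_inv_mul _ (by rw [det_Bm]; exact hd.isUnit),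
            Matrix.one_mulVec]
  rw [cm, ← Matrix.mulVec_mulVec, h1, Bm_mulVec_e0]

lemma cm_mulVec_q {p q p' q' : Fin 2 → ℝ} (hd : dd p q ≠ 0) :
    (cm p q p' q').mulVec q = (dd p q / dd p' q') • q' := by
  have h1 : (Bm p q)⁻¹.mulVec q = ![0, 1] := by
    calc (Bm p q)⁻¹.mulVec _ = (Bm p q)⁻¹.mulVec ((Bm p q).mulVec ![0, 1]) := by
          rw [Bm_mulVec_e1]
      _ = ![0, 1] := by
          rw [Matrix.mulVec_mulVec, Matrix.nonsing_inv_mul _ (by rw [det_Bm]; exact hd.isUnit),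
            Matrix.one_mulVec]
  rw [cm, ← Matrix.mulVec_mulVec, h1, Bm_mulVec_e1]

/-- Any SL2 element realizing the flag correspondence equals `cm p q p' q'`. -/
lemma unique_aux {p q p' q' : Fin 2 → ℝ} (hd : dd p q ≠ 0) (hd' : dd p' q' ≠ 0)
    (A : Matrix.SpecialLinearGroup (Fin 2) ℝ)
    (hV : Submodule.map (iota A).1.mulVecLin (span ℝ {emb p}) = span ℝ {emb p'})
    (hW : Submodule.map (iota A).1.mulVecLin (span ℝ {emb p, flat q}) =
      span ℝ {emb p', flat q'}) :
    A.1 = cm p q p' q' := by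
  rw [map_V] at hV
  rw [map_W] at hW
  -- A.mulVec p = p'
  have hp : A.1.mulVec p = p' := by
    have hm : emb (A.1.mulVec p) ∈ span ℝ {emb p'} := by
      rw [← hV]; exact mem_span_singleton_self _
    rw [mem_span_singleton] at hm
    obtain ⟨c, hc⟩ := hm
    have h1 := congrFun hc 1
    simp [emb] at h1
    apply emb_inj
    rw [← hc, h1, one_smul]
  -- A.mulVec q = β • q'
  have hm : flat (A.1.mulVec q) ∈ span ℝ {emb p', flat q'} := by
    rw [← hW, mem_span_pair]
    exact ⟨0, 1, by simp⟩
  rw [mem_span_pair] at hm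
  obtain ⟨a, b, hab⟩ := hm
  have h1 := congrFun hab 1
  simp [emb, flat] at h1
  subst h1
  have hq : A.1.mulVec q = b • q' := by
    apply flat_inj
    rw [flat_smul, ← hab]
    simp
  -- matrix identity
  have hmul : A.1 * Bm p q = Bm p' (b • q') := by
    have e0 := congrFun hp 0
    have e1 := congrFun hp 1
    have f0 := congrFun hq 0
    have f1 := congrFun hq 1
    simp [Matrix.mulVec, dotProduct, Fin.sum_univ_two] at e0 e1 f0 f1
    ext i j
    fin_cases i <;> fin_cases j <;>
      simp [Matrix.mul_apply, Fin.sum_univ_two, Bm] <;> linarith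
  -- determinant gives b = dd p q / dd p' q'
  have hdet := congrArg Matrix.det hmul
  rw [Matrix.det_mul, A.2, one_mul, det_Bm, det_Bm, dd_smul_right] at hdet
  have hb : b = dd p q / dd p' q' := by
    field_simp
    linarith
  rw [hb] at hmul
  rw [cm, ← hmul, Matrix.mul_assoc,
    Matrix.mul_nonsing_inv _ (by rw [det_Bm]; exact hd.isUnit), Matrix.mul_one]

end S13
end

/-- the action of `SL(2,ℝ)` via `ι` preserves `Ω` and is simply
transitive on `Ω`. -/


theorem stmt13 :
    (∀ A : Matrix.SpecialLinearGroup (Fin 2) ℝ, ∀ V W : Submodule ℝ (Fin 3 → ℝ),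
      MemOmega V W →
        MemOmega (Submodule.map (iota A).1.mulVecLin V)
          (Submodule.map (iota A).1.mulVecLin W)) ∧
    (∀ V W V' W' : Submodule ℝ (Fin 3 → ℝ), MemOmega V W → MemOmega V' W' →
      ∃! A : Matrix.SpecialLinearGroup (Fin 2) ℝ,
        Submodule.map (iota A).1.mulVecLin V = V' ∧
        Submodule.map (iota A).1.mulVecLin W = W') := by
  constructor
  · exact fun A V W h => S13.part1 A h
  · intro V W V' W' h h'
    rw [S13.memOmega_iff] at h h'
    obtain ⟨p, q, hd, rfl, rfl⟩ := h
    obtain ⟨p', q', hd', rfl, rfl⟩ := h'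
    have hl : S13.dd p q / S13.dd p' q' ≠ 0 := div_ne_zero hd hd'
    refine ⟨(⟨S13.cm p q p' q', S13.det_cm hd hd'⟩ : Matrix.SpecialLinearGroup (Fin 2) ℝ), ⟨?_, ?_⟩, ?_⟩
    · refine (S13.map_V _ p).trans ?_
      rw [S13.cm_mulVec_p hd]
    · refine (S13.map_W _ p q).trans ?_
      rw [S13.cm_mulVec_p hd, S13.cm_mulVec_q hd, S13.flat_smul,
        S13.span_pair_smul_right hl]
    · intro B hB
      exact Subtype.ext (S13.unique_aux hd hd' B hB.1 hB.2)
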